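/- (Parameter-shift rule) Let H be an n×n complex Hermitian matrix whose eigenvalues are contained in {r, −r} for some real r > 0, equivalently Hᴴ = H and H·H = r²·1, and let U(θ) = Matrix.exp(ℂ, (I·θ) • H) be the one-parameter unitary group it generates. Then there is a shift s > 0 (one may take any s with sin(r·s) = 1/2, e.g. s = π/(6r)) such that for all θ ∈ ℝ the derivative of U at θ equals r • (U(θ + s) − U(θ − s)); that is, HasDerivAt U (r • (U(θ+s) − U(θ−s))) θ, this common value being (I • H) * U(θ). -/

import Mathlib

open scoped Matrix

attribute [local instance] Matrix.normedAddCommGroup Matrix.normedSpace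

theorem exp_formula_aux {n : ℕ} (H : Matrix (Fin n) (Fin n) ℂ) (r : ℝ) (hr : 0 < r)
    (hsq : H * H = ((r : ℂ) ^ 2) • (1 : Matrix (Fin n) (Fin n) ℂ)) (t : ℝ) :
    NormedSpace.exp ((Complex.I * (t : ℂ)) • H) =
      (Complex.cos ((r : ℂ) * t)) • (1 : Matrix (Fin n) (Fin n) ℂ)
        + (Complex.I * Complex.sin ((r : ℂ) * t) / r) • H := by
  have hr0 : (r : ℂ) ≠ 0 := by exact_mod_cast hr.ne'
  rw [NormedSpace.exp_eq_tsum (𝕂 := ℂ)]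
  refine HasSum.tsum_eq ?_
  have heven : ∀ k : ℕ, ((((2 * k).factorial : ℂ))⁻¹) • ((Complex.I * (t : ℂ)) • H) ^ (2 * k)
      = ((-1) ^ k * ((r : ℂ) * t) ^ (2 * k) / ((2 * k).factorial : ℂ)) •
          (1 : Matrix (Fin n) (Fin n) ℂ) := by
    intro k
    have h2 : H ^ (2 * k) = (((r : ℂ) ^ 2) ^ k) • (1 : Matrix (Fin n) (Fin n) ℂ) := by
      rw [pow_mul, pow_two, hsq, smul_pow, one_pow]
    rw [smul_pow, h2, smul_smul, smul_smul]
    congr 1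
    have hI : Complex.I ^ (2 * k) = (-1 : ℂ) ^ k := by rw [pow_mul, Complex.I_sq]
    rw [mul_pow, hI]
    field_simp
    ring
  have hodd : ∀ k : ℕ, ((((2 * k + 1).factorial : ℂ))⁻¹) • ((Complex.I * (t : ℂ)) • H) ^ (2 * k + 1)
      = ((Complex.I / r) * ((-1) ^ k * ((r : ℂ) * t) ^ (2 * k + 1) /
          ((2 * k + 1).factorial : ℂ))) • H := by
    intro k
    have h2 : H ^ (2 * k + 1) = (((r : ℂ) ^ 2) ^ k) • H := by
      rw [pow_succ, pow_mul, pow_two, hsq, smul_pow, one_pow, Matrix.smul_mul, one_mul]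
    rw [smul_pow, h2, smul_smul, smul_smul]
    congr 1
    have hI : Complex.I ^ (2 * k + 1) = (-1 : ℂ) ^ k * Complex.I := by
      rw [pow_succ, pow_mul, Complex.I_sq]
    rw [mul_pow, hI]
    linear_combination (-((-1 : ℂ) ^ k * Complex.I * (t:ℂ) ^ (2*k+1) *
      (((2*k+1).factorial : ℂ))⁻¹ * (r:ℂ) ^ (2*k))) * (mul_inv_cancel₀ hr0)
  refine HasSum.even_add_odd ?_ ?_
  · simp_rw [heven]
    exact (Complex.hasSum_cos ((r : ℂ) * t)).smul_const _
  · have h := (((Complex.hasSum_sin ((r : ℂ) * t)).mul_left (Complex.I / r)).smul_const H)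
    simp_rw [hodd]
    rw [show Complex.I * Complex.sin ((r:ℂ)*t) / (r:ℂ)
      = Complex.I / r * Complex.sin ((r:ℂ)*t) from by ring]
    exact h

/-- Parameter-shift rule: if `H` is an `n×n` Hermitian matrix with `H·H = r²·1` for some
`r > 0` (so its eigenvalues lie in `{r, −r}`), and `U(θ) = exp((I·θ) • H)`, then there is a
shift `s > 0` with `sin(r·s) = 1/2` such that for all `θ` the derivative of `U` at `θ`
equals `r • (U(θ+s) − U(θ−s))`, this common value being `(I • H) * U(θ)`. -/
theorem stmt_14 {n : ℕ} (H : Matrix (Fin n) (Fin n) ℂ) (r : ℝ) (hr : 0 < r)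
    (hherm : H.conjTranspose = H)
    (hsq : H * H = ((r : ℂ) ^ 2) • (1 : Matrix (Fin n) (Fin n) ℂ)) :
    ∃ s : ℝ, 0 < s ∧ Real.sin (r * s) = 1 / 2 ∧
      ∀ θ : ℝ,
        HasDerivAt (fun t : ℝ => NormedSpace.exp ((Complex.I * (t : ℂ)) • H))
          (r • (NormedSpace.exp ((Complex.I * ((θ + s : ℝ) : ℂ)) • H) -
            NormedSpace.exp ((Complex.I * ((θ - s : ℝ) : ℂ)) • H))) θ ∧
        r • (NormedSpace.exp ((Complex.I * ((θ + s : ℝ) : ℂ)) • H) -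
            NormedSpace.exp ((Complex.I * ((θ - s : ℝ) : ℂ)) • H)) =
          (Complex.I • H) * NormedSpace.exp ((Complex.I * (θ : ℂ)) • H) := by
  have hr0 : (r : ℂ) ≠ 0 := by exact_mod_cast hr.ne'
  refine ⟨Real.pi / (6 * r), by positivity, ?_, ?_⟩
  · rw [show r * (Real.pi / (6 * r)) = Real.pi / 6 by field_simp]
    exact Real.sin_pi_div_six
  set s := Real.pi / (6 * r) with hs_def
  have hsinR : Real.sin (r * s) = 1 / 2 := by
    rw [show r * s = Real.pi / 6 by rw [hs_def]; field_simp]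
    exact Real.sin_pi_div_six
  have hsin : Complex.sin ((r : ℂ) * s) = 1 / 2 := by
    rw [show ((r : ℂ) * s) = ((r * s : ℝ) : ℂ) by push_cast; ring, ← Complex.ofReal_sin, hsinR]
    norm_num
  intro θ
  have e1 : (r:ℂ) * ((θ + s : ℝ) : ℂ) = (r:ℂ)*θ + (r:ℂ)*s := by push_cast; ring
  have e2 : (r:ℂ) * ((θ - s : ℝ) : ℂ) = (r:ℂ)*θ - (r:ℂ)*s := by push_cast; ring
  -- the closed form of the shift difference
  have hD : r • (NormedSpace.exp ((Complex.I * ((θ + s : ℝ) : ℂ)) • H) -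
            NormedSpace.exp ((Complex.I * ((θ - s : ℝ) : ℂ)) • H)) =
      (-(r:ℂ) * Complex.sin ((r:ℂ)*θ)) • (1 : Matrix (Fin n) (Fin n) ℂ)
        + (Complex.I * Complex.cos ((r:ℂ)*θ)) • H := by
    rw [exp_formula_aux H r hr hsq, exp_formula_aux H r hr hsq, e1, e2,
      Complex.cos_add, Complex.cos_sub, Complex.sin_add, Complex.sin_sub, hsin]
    match_scalars
    · simp [Complex.coe_algebraMap]
      ring
    · simp only [Complex.coe_algebraMap]
      field_simp
      ring
  have key : r • (NormedSpace.exp ((Complex.I * ((θ + s : ℝ) : ℂ)) • H) -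
            NormedSpace.exp ((Complex.I * ((θ - s : ℝ) : ℂ)) • H)) =
          (Complex.I • H) * NormedSpace.exp ((Complex.I * (θ : ℂ)) • H) := by
    rw [hD, exp_formula_aux H r hr hsq, Matrix.mul_add, Matrix.mul_smul, Matrix.mul_smul,
      Matrix.smul_mul, Matrix.smul_mul, Matrix.mul_one, hsq]
    match_scalars
    · field_simp
      linear_combination (-Complex.sin ((r:ℂ)*θ)) * Complex.I_sq
    · ring
  refine ⟨?_, key⟩
  rw [hD]
  have hfun : (fun t : ℝ => NormedSpace.exp ((Complex.I * (t : ℂ)) • H))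
      = fun t : ℝ => (Complex.cos ((r : ℂ) * t)) • (1 : Matrix (Fin n) (Fin n) ℂ)
        + (Complex.I * Complex.sin ((r : ℂ) * t) / r) • H := by
    funext t; exact exp_formula_aux H r hr hsq t
  rw [hfun]
  -- scalar derivatives
  have hline : HasDerivAt (fun t : ℝ => (r:ℂ) * (t:ℂ)) ((r:ℂ)) θ := by
    simpa using (Complex.ofRealCLM.hasDerivAt (x := θ)).const_mul (r:ℂ)
  have hcos : HasDerivAt (fun t : ℝ => Complex.cos ((r:ℂ) * t))
      (-(r:ℂ) * Complex.sin ((r:ℂ)*θ)) θ := by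
    have := (Complex.hasDerivAt_cos ((r:ℂ)*θ)).scomp θ hline
    simpa [smul_eq_mul, mul_comm, Function.comp_def] using this
  have hsinD : HasDerivAt (fun t : ℝ => Complex.I * Complex.sin ((r:ℂ) * t) / r)
      (Complex.I * Complex.cos ((r:ℂ)*θ)) θ := by
    have h1 := (Complex.hasDerivAt_sin ((r:ℂ)*θ)).scomp θ hline
    have h2 := (h1.const_mul Complex.I).div_const (r:ℂ)
    have h3 : Complex.I * ((r:ℂ) * Complex.cos ((r:ℂ)*(θ:ℂ))) / (r:ℂ)
        = Complex.I * Complex.cos ((r:ℂ)*(θ:ℂ)) := by field_simp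
    simpa [smul_eq_mul, h3] using h2
  exact (hcos.smul_const (1 : Matrix (Fin n) (Fin n) ℂ)).add (hsinD.smul_const H)
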